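/- Let k ≥ 2 be an integer, and let C_k > 0, α > 0, β > 0 be reals. Suppose given reals t_1, …, t_k with 0 < t_1 ≤ t_2 ≤ ⋯ ≤ t_k, and for each i = 1, …, k−1 reals U_i > 0, α_i with 0 < α_i ≤ α, and β_i with 0 < β_i ≤ β. If C_k/t_k + Σ_{i=1}^{k−1} U_i ≤ ((k−1)·((α+β)^{1/k} − 1) + ((α+β)^{1/k} − α))/β, then there exists an index j ∈ {1, …, k} such that C_k + Σ_{i=1}^{k−1} α_i·t_i·U_i + Σ_{i=1}^{j−1} β_i·t_i·U_i ≤ t_j. -/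

import Mathlib

open Finset

set_option maxHeartbeats 1000000 in
private theorem k2u_total_utilization_form_aux
    (k : ℕ) (hk : 2 ≤ k) (Ck α β : ℝ)
    (hCk : 0 < Ck) (hα : 0 < α) (hβ : 0 < β)
    (t U a b : ℕ → ℝ)
    (ht1 : 0 < t 1)
    (hmono : ∀ i ∈ Finset.Icc 1 k, ∀ j ∈ Finset.Icc 1 k, i ≤ j → t i ≤ t j)
    (hU : ∀ i ∈ Finset.Icc 1 (k - 1), 0 < U i)
    (ha : ∀ i ∈ Finset.Icc 1 (k - 1), 0 < a i ∧ a i ≤ α)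
    (hb : ∀ i ∈ Finset.Icc 1 (k - 1), 0 < b i ∧ b i ≤ β)
    (hcond : Ck / t k + ∑ i ∈ Finset.Icc 1 (k - 1), U i ≤
      (((k : ℝ) - 1) * ((α + β) ^ ((1 : ℝ) / k) - 1) + ((α + β) ^ ((1 : ℝ) / k) - α)) / β) :
    ∃ j ∈ Finset.Icc 1 k,
      Ck + (∑ i ∈ Finset.Icc 1 (k - 1), a i * t i * U i)
        + (∑ i ∈ Finset.Icc 1 (j - 1), b i * t i * U i) ≤ t j := by
  by_contra hcon
  push_neg at hcon
  have hk1 : 1 ≤ k := le_trans one_le_two hk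
  have hksub : k - 1 + 1 = k := by omega
  -- positivity of t on [1, k]
  have ht : ∀ i ∈ Finset.Icc 1 k, 0 < t i := by
    intro i hi
    exact lt_of_lt_of_le ht1 (hmono 1 (Finset.mem_Icc.mpr ⟨le_refl 1, hk1⟩) i hi
      (Finset.mem_Icc.mp hi).1)
  set θ : ℝ := (α + β) ^ ((1 : ℝ) / k) with hθ
  set S : ℝ := ∑ i ∈ Finset.Icc 1 (k - 1), t i * U i with hS
  set G : ℕ → ℝ := fun j => Ck + α * S + β * ∑ i ∈ Finset.Icc 1 (j - 1), t i * U i with hG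
  have hsub : ∀ j, j ≤ k → Finset.Icc 1 (j - 1) ⊆ Finset.Icc 1 (k - 1) := by
    intro j hj
    apply Finset.Icc_subset_Icc_right; omega
  have hsumpos : ∀ j, j ≤ k → 0 ≤ ∑ i ∈ Finset.Icc 1 (j - 1), t i * U i := by
    intro j hj
    apply Finset.sum_nonneg
    intro i hi
    have hi' := hsub j hj hi
    have : i ∈ Finset.Icc 1 k := Finset.mem_Icc.mpr ⟨(Finset.mem_Icc.mp hi').1, by
      have := (Finset.mem_Icc.mp hi').2; omega⟩
    exact le_of_lt (mul_pos (ht i this) (hU i hi'))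
  have hSpos : 0 ≤ S := hsumpos k le_rfl
  have hGpos : ∀ j, j ≤ k → 0 < G j := by
    intro j hj
    have := hsumpos j hj
    have : 0 ≤ β * ∑ i ∈ Finset.Icc 1 (j - 1), t i * U i := mul_nonneg hβ.le this
    simp only [hG]
    nlinarith [mul_nonneg hα.le hSpos]
  -- t j < G j for j in [1,k]
  have htG : ∀ j ∈ Finset.Icc 1 k, t j < G j := by
    intro j hj
    have h1 := hcon j hj
    have h2 : ∑ i ∈ Finset.Icc 1 (k - 1), a i * t i * U i ≤ α * S := by
      rw [hS, Finset.mul_sum]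
      apply Finset.sum_le_sum
      intro i hi
      have hti : 0 < t i := ht i (Finset.mem_Icc.mpr ⟨(Finset.mem_Icc.mp hi).1, by
        have := (Finset.mem_Icc.mp hi).2; omega⟩)
      have h := (ha i hi).2
      nlinarith [mul_le_mul_of_nonneg_right h (mul_pos hti (hU i hi)).le]
    have h3 : ∑ i ∈ Finset.Icc 1 (j - 1), b i * t i * U i ≤
        β * ∑ i ∈ Finset.Icc 1 (j - 1), t i * U i := by
      rw [Finset.mul_sum]
      apply Finset.sum_le_sum
      intro i hi
      have hi' := hsub j (Finset.mem_Icc.mp hj).2 hi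
      have hti : 0 < t i := ht i (Finset.mem_Icc.mpr ⟨(Finset.mem_Icc.mp hi').1, by
        have := (Finset.mem_Icc.mp hi').2; omega⟩)
      have h := (hb i hi').2
      nlinarith [mul_le_mul_of_nonneg_right h (mul_pos hti (hU i hi')).le]
    simp only [hG]
    linarith
  -- step relation
  have hGstep : ∀ j ∈ Finset.Icc 1 (k - 1), G (j + 1) = G j + β * (t j * U j) := by
    intro j hj
    obtain ⟨hj1, hj2⟩ := Finset.mem_Icc.mp hj
    have hj' : j - 1 + 1 = j := by omega
    have hrw : ∑ i ∈ Finset.Icc 1 j, t i * U i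
        = (∑ i ∈ Finset.Icc 1 (j - 1), t i * U i) + t j * U j := by
      conv_lhs => rw [← hj']
      rw [Finset.sum_Icc_succ_top (by omega : 1 ≤ j - 1 + 1), hj']
    have : j + 1 - 1 = j := rfl
    simp only [hG, this, hrw]
    ring
  -- per-step inequality: G(j+1)/G j - 1 < β * U j
  have hstep : ∀ j ∈ Finset.Icc 1 (k - 1), G (j + 1) / G j - 1 < β * U j := by
    intro j hj
    obtain ⟨hj1, hj2⟩ := Finset.mem_Icc.mp hj
    have hjk : j ≤ k := by omega
    have hGj := hGpos j hjk
    have htj : 0 < t j := ht j (Finset.mem_Icc.mpr ⟨hj1, hjk⟩)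
    have hUj := hU j hj
    have htGj := htG j (Finset.mem_Icc.mpr ⟨hj1, hjk⟩)
    rw [hGstep j hj]
    rw [div_sub_one hGj.ne', div_lt_iff₀ hGj]
    nlinarith [mul_lt_mul_of_pos_left htGj (mul_pos hβ hUj)]
  have hne : (Finset.Icc 1 (k - 1)).Nonempty := ⟨1, Finset.mem_Icc.mpr ⟨le_rfl, by omega⟩⟩
  have hcard : (Finset.Icc 1 (k - 1)).card = k - 1 := by
    rw [Nat.card_Icc]; omega
  -- sum of steps
  have hsumstep : (∑ j ∈ Finset.Icc 1 (k - 1), G (j + 1) / G j) - ((k : ℝ) - 1)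
      < β * ∑ i ∈ Finset.Icc 1 (k - 1), U i := by
    have := Finset.sum_lt_sum_of_nonempty hne hstep
    rw [Finset.sum_sub_distrib, Finset.sum_const, hcard, nsmul_eq_mul, mul_one] at this
    rw [Finset.mul_sum]
    have hcast : ((k - 1 : ℕ) : ℝ) = (k : ℝ) - 1 := by
      push_cast [Nat.cast_sub hk1]; ring
    rw [hcast] at this
    exact this
  -- telescoping product
  have hprodtel : ∀ m, 1 ≤ m → m ≤ k →
      ∏ j ∈ Finset.Icc 1 (m - 1), (G (j + 1) / G j) = G m / G 1 := by
    intro m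
    induction m with
    | zero => omega
    | succ n ih =>
      intro _ h2
      rcases Nat.eq_zero_or_pos n with hn | hn
      · subst hn
        simp [div_self (hGpos 1 hk1).ne']
      · have hnk : n ≤ k := by omega
        have hrec := ih hn hnk
        have : n + 1 - 1 = n := rfl
        rw [this]
        have hn' : n - 1 + 1 = n := Nat.succ_pred_eq_of_pos hn
        rw [← hn', Finset.prod_Icc_succ_top (by omega : 1 ≤ n - 1 + 1), hn', hrec]
        have h1 := (hGpos n hnk).ne'
        have h2 := (hGpos 1 hk1).ne'
        field_simp
  have hGk := hGpos k le_rfl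
  have hG1 := hGpos 1 hk1
  -- AM-GM setup
  set z : ℕ → ℝ := fun j => if j = k then (α + β) * (G 1 / G k) else G (j + 1) / G j with hz
  have hzpos : ∀ j ∈ Finset.Icc 1 k, 0 < z j := by
    intro j hj
    obtain ⟨hj1, hj2⟩ := Finset.mem_Icc.mp hj
    simp only [hz]
    split_ifs
    · positivity
    · have hjk : j ≤ k - 1 := by omega
      exact div_pos (hGpos (j + 1) (by omega)) (hGpos j (by omega))
  have hzprod : ∏ j ∈ Finset.Icc 1 k, z j = α + β := by
    rw [← hksub, Finset.prod_Icc_succ_top (by omega : 1 ≤ k - 1 + 1), hksub]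
    have h1 : ∏ j ∈ Finset.Icc 1 (k - 1), z j = ∏ j ∈ Finset.Icc 1 (k - 1), (G (j + 1) / G j) := by
      apply Finset.prod_congr rfl
      intro j hj
      have : j ≠ k := by have := (Finset.mem_Icc.mp hj).2; omega
      simp [hz, this]
    rw [h1, hprodtel k hk1 le_rfl]
    simp only [hz, if_pos rfl]
    field_simp
  have hwsum : ∑ _j ∈ Finset.Icc 1 k, (1 : ℝ) / k = 1 := by
    rw [Finset.sum_const, Nat.card_Icc]
    have : k + 1 - 1 = k := rfl
    rw [this, nsmul_eq_mul]
    field_simp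
  have hamgm := Real.geom_mean_le_arith_mean_weighted (Finset.Icc 1 k)
    (fun _ => (1 : ℝ) / k) z (fun i _ => by positivity) hwsum
    (fun i hi => (hzpos i hi).le)
  rw [Real.finset_prod_rpow _ _ (fun i hi => (hzpos i hi).le), hzprod] at hamgm
  -- hamgm : (α+β)^(1/k) ≤ ∑ (1/k) * z i
  have hzsum : ∑ i ∈ Finset.Icc 1 k, (1 : ℝ) / k * z i
      = 1 / k * ((∑ j ∈ Finset.Icc 1 (k - 1), G (j + 1) / G j) + (α + β) * (G 1 / G k)) := by
    rw [← Finset.mul_sum]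
    congr 1
    rw [← hksub, Finset.sum_Icc_succ_top (by omega : 1 ≤ k - 1 + 1), hksub]
    congr 1
    · apply Finset.sum_congr rfl
      intro j hj
      have : j ≠ k := by have := (Finset.mem_Icc.mp hj).2; omega
      simp [hz, this]
    · simp [hz]
  rw [hzsum] at hamgm
  have hkpos : (0 : ℝ) < k := by positivity
  have hamgm2 : (k : ℝ) * θ ≤ (∑ j ∈ Finset.Icc 1 (k - 1), G (j + 1) / G j)
      + (α + β) * (G 1 / G k) := by
    have h := mul_le_mul_of_nonneg_left hamgm hkpos.le
    calc (k : ℝ) * θ ≤ (k : ℝ) * (1 / k * ((∑ j ∈ Finset.Icc 1 (k - 1), G (j + 1) / G j)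
          + (α + β) * (G 1 / G k))) := h
      _ = _ := by field_simp
  -- Ck/Gk identity
  have htk : 0 < t k := ht k (Finset.mem_Icc.mpr ⟨hk1, le_rfl⟩)
  have htGk := htG k (Finset.mem_Icc.mpr ⟨hk1, le_rfl⟩)
  have hGkval : G k = Ck + α * S + β * S := rfl
  have hG1val : G 1 = Ck + α * S := by
    simp [hG]
  have hCkGk : β * (Ck / G k) = (α + β) * (G 1 / G k) - α := by
    field_simp
    rw [hGkval, hG1val]; ring
  have hCkt : Ck / G k < Ck / t k := by
    exact div_lt_div_of_pos_left hCk htk htGk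
  -- multiply hcond by β
  have hR : (Ck / t k + ∑ i ∈ Finset.Icc 1 (k - 1), U i) * β
      ≤ ((k : ℝ) - 1) * (θ - 1) + (θ - α) := (le_div_iff₀ hβ).mp hcond
  have hfin := mul_lt_mul_of_pos_left hCkt hβ
  nlinarith [hfin, hR, hamgm2, hsumstep, hCkGk]


theorem k2u_total_utilization_form
    (k : ℕ) (hk : 2 ≤ k) (Ck α β : ℝ)
    (hCk : 0 < Ck) (hα : 0 < α) (hβ : 0 < β)
    (t U a b : ℕ → ℝ)
    (ht1 : 0 < t 1)
    (hmono : ∀ i ∈ Finset.Icc 1 k, ∀ j ∈ Finset.Icc 1 k, i ≤ j → t i ≤ t j)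
    (hU : ∀ i ∈ Finset.Icc 1 (k - 1), 0 < U i)
    (ha : ∀ i ∈ Finset.Icc 1 (k - 1), 0 < a i ∧ a i ≤ α)
    (hb : ∀ i ∈ Finset.Icc 1 (k - 1), 0 < b i ∧ b i ≤ β)
    (hcond : Ck / t k + ∑ i ∈ Finset.Icc 1 (k - 1), U i ≤
      (((k : ℝ) - 1) * ((α + β) ^ ((1 : ℝ) / k) - 1) + ((α + β) ^ ((1 : ℝ) / k) - α)) / β) :
    ∃ j ∈ Finset.Icc 1 k,
      Ck + (∑ i ∈ Finset.Icc 1 (k - 1), a i * t i * U i)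
        + (∑ i ∈ Finset.Icc 1 (j - 1), b i * t i * U i) ≤ t j :=
  k2u_total_utilization_form_aux k hk Ck α β hCk hα hβ t U a b ht1 hmono hU ha hb hcond
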